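/- Let F be a field with char F = 2, let β₁ ∈ F, assume the polynomial (β₁t³ + t + 1)(β₁t² + β₁t + 1) in t has no root in F, and let A = A_{8,2}(β₁) = [[0, 1, 1, 1],[β₁, 0, 0, 1]]. Then the only 2×2 matrix D over F with DA = A(D⊗I₂ + I₂⊗D) is the zero matrix, and the invertible 2×2 matrices g with gA = A(g⊗g) are exactly: the identity matrix, together with the matrices [[1+d, 1+d+d²],[1, d]] for those d ∈ F with d²+d+1 ≠ 0 and β₁ = 1/(d²+d+1), together with the matrices [[d, d+d²],[(1+d)/d, d]] for those d ∈ F with d ≠ 0 and β₁ = (1+d)/d³. -/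
import Mathlib

open Matrix Kronecker

/-- The matrix of structure constants (MSC) of a 2-dimensional algebra, as a
`2 × (2 × 2)` matrix: the column indexed by `(j,k)` corresponds to the product
`e_j · e_k`, so the columns in order `(0,0), (0,1), (1,0), (1,1)` carry the
entries `α₁ α₂ α₃ α₄` (first row) and `β₁ β₂ β₃ β₄` (second row). -/
def MSC {F : Type*} [Field F] (a1 a2 a3 a4 b1 b2 b3 b4 : F) :
    Matrix (Fin 2) (Fin 2 × Fin 2) F :=
  Matrix.of fun i j => !![a1, a2, a3, a4; b1, b2, b3, b4] i (finProdFinEquiv j)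

/-- `g` is an automorphism matrix of the algebra with MSC `A`:
`g` is invertible and `g • A = A • (g ⊗ g)`. -/
def IsAutoMat {F : Type*} [Field F] (A : Matrix (Fin 2) (Fin 2 × Fin 2) F)
    (g : Matrix (Fin 2) (Fin 2) F) : Prop :=
  IsUnit g ∧ g * A = A * (g ⊗ₖ g)

/-- `D` is a derivation matrix of the algebra with MSC `A`:
`D • A = A • (D ⊗ I + I ⊗ D)`. -/
def IsDerMat {F : Type*} [Field F] (A : Matrix (Fin 2) (Fin 2 × Fin 2) F)
    (D : Matrix (Fin 2) (Fin 2) F) : Prop :=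
  D * A = A * (D ⊗ₖ (1 : Matrix (Fin 2) (Fin 2) F) + (1 : Matrix (Fin 2) (Fin 2) F) ⊗ₖ D)

private lemma aut_iff' {F : Type*} [Field F] (b1 a b c d : F) :
    !![a,b;c,d] * MSC 0 1 1 1 b1 0 0 1 = MSC 0 1 1 1 b1 0 0 1 * (!![a,b;c,d] ⊗ₖ !![a,b;c,d]) ↔
    ((b * b1 = a * c + (c * a + c * c) ∧ a = a * d + (c * b + c * d)) ∧
      a = b * c + (d * a + d * c) ∧ a + b = b * d + (d * b + d * d)) ∧
    (d * b1 = b1 * (a * a) + c * c ∧ c = b1 * (a * b) + c * d) ∧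
      c = b1 * (b * a) + d * c ∧ c + d = b1 * (b * b) + d * d := by
  rw [← Matrix.ext_iff]
  simp only [Fin.forall_fin_two, Prod.forall]
  simp [MSC, Matrix.mul_apply, Fintype.sum_prod_type, Fin.sum_univ_two, finProdFinEquiv]

private lemma der_iff' {F : Type*} [Field F] (b1 a b c d : F) :
    !![a,b;c,d] * MSC 0 1 1 1 b1 0 0 1 = MSC 0 1 1 1 b1 0 0 1 *
      (!![a,b;c,d] ⊗ₖ (1 : Matrix (Fin 2) (Fin 2) F) + (1 : Matrix (Fin 2) (Fin 2) F) ⊗ₖ !![a,b;c,d]) ↔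
    ((b * b1 = c + c ∧ a = a + d + c) ∧ a = d + a + c ∧ a + b = b + (b + (d + d))) ∧
      (d * b1 = b1 * (a + a) ∧ (b1 = 0 ∨ b = 0)) ∧ (b1 = 0 ∨ b = 0) ∧ c = d := by
  rw [← Matrix.ext_iff]
  simp only [Fin.forall_fin_two, Prod.forall]
  simp [MSC, Matrix.mul_apply, Matrix.one_apply, Fintype.sum_prod_type, Fin.sum_univ_two, finProdFinEquiv]

private lemma mat2_eq {F : Type*} [Field F] {w x y z w' x' y' z' : F}
    (h1 : w = w') (h2 : x = x') (h3 : y = y') (h4 : z = z') :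
    !![w,x;y,z] = !![w',x';y',z'] := by rw [h1, h2, h3, h4]

theorem stmt_17 {F : Type*} [Field F] (hch : ringChar F = 2)
    (b1 : F)
    (hroot : ∀ t : F,
      (b1 * t ^ 3 + t + 1) * (b1 * t ^ 2 + b1 * t + 1) ≠ 0)
    (A : Matrix (Fin 2) (Fin 2 × Fin 2) F)
    (hA : A = MSC 0 1 1 1 b1 0 0 1) :
    (∀ D : Matrix (Fin 2) (Fin 2) F, IsDerMat A D ↔ D = 0) ∧
    (∀ g : Matrix (Fin 2) (Fin 2) F,
      IsAutoMat A g ↔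
        g = 1 ∨
        (∃ d : F, d ^ 2 + d + 1 ≠ 0 ∧ b1 = 1 / (d ^ 2 + d + 1) ∧
          g = !![1 + d, 1 + d + d ^ 2; 1, d]) ∨
        (∃ d : F, d ≠ 0 ∧ b1 = (1 + d) / d ^ 3 ∧
          g = !![d, d + d ^ 2; (1 + d) / d, d])) := by
  haveI : CharP F 2 := by rw [← hch]; exact ringChar.charP F
  have h2 : (2 : F) = 0 := by exact_mod_cast CharP.cast_eq_zero F 2
  have hb1 : b1 ≠ 0 := by
    intro h0
    exact hroot 1 (by rw [h0]; linear_combination h2)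
  constructor
  · -- derivations
    intro D
    constructor
    · intro h
      unfold IsDerMat at h
      rw [hA] at h
      have h' := (der_iff' b1 (D 0 0) (D 0 1) (D 1 0) (D 1 1)).mp
        (by rw [← Matrix.eta_fin_two D]; exact h)
      obtain ⟨⟨⟨f1, f2⟩, f3, f4⟩, ⟨f5, f6⟩, f7, f8⟩ := h'
      have hb : D 0 1 = 0 := f6.resolve_left hb1
      have hdb1 : D 1 1 * b1 = 0 := by linear_combination f5 + (D 0 0) * b1 * h2
      have hd : D 1 1 = 0 := (mul_eq_zero.mp hdb1).resolve_right hb1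
      have hc : D 1 0 = 0 := by rw [f8, hd]
      have ha : D 0 0 = 0 := by linear_combination f4 + hb + (D 1 1) * h2
      rw [Matrix.eta_fin_two D, ha, hb, hc, hd]
      ext i j
      fin_cases i <;> fin_cases j <;> simp
    · intro h
      rw [h]
      unfold IsDerMat
      simp [Matrix.zero_kronecker, Matrix.kronecker_zero]
  · -- automorphisms
    intro g
    constructor
    · rintro ⟨hu, he⟩
      rw [Matrix.isUnit_iff_isUnit_det, Matrix.det_fin_two, isUnit_iff_ne_zero] at hu
      rw [hA] at he
      have h' := (aut_iff' b1 (g 0 0) (g 0 1) (g 1 0) (g 1 1)).mp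
        (by rw [← Matrix.eta_fin_two g]; exact he)
      set a := g 0 0 with ha_def
      set b := g 0 1 with hb_def
      set c := g 1 0 with hc_def
      set d := g 1 1 with hd_def
      obtain ⟨⟨⟨e1, e2⟩, e3, e4⟩, ⟨e5, e6⟩, e7, e8⟩ := h'
      have hkey : b1 * ((a + d) * (a + d) - (a + d)) = 0 := by
        linear_combination e1 - b1 * e4 - e5 + (-(b*d*b1) + a*d*b1 + a*c) * h2
      have hkey2 : (a + d) * ((a + d) - 1) = 0 := by
        rcases mul_eq_zero.mp hkey with h | h
        · exact absurd h hb1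
        · linear_combination h
      rcases mul_eq_zero.mp hkey2 with hs0 | hs1
      · -- Case B : a + d = 0
        have had : a = d := by linear_combination hs0 - d * h2
        have hbB : b = d + d ^ 2 := by
          linear_combination -e4 + had + (-(d^2) + b - b*d) * h2
        by_cases hdz : d = 0
        · exfalso
          have hc0 : c = 0 := by
            have hcc : c * c = 0 := by
              linear_combination -e1 + (-(2*c)) * had + b1 * hbB + (b1 + d*b1 - 2*c) * hdz
            exact mul_self_eq_zero.mp hcc
          exact hu (by linear_combination d * had - c * hbB + (-d - d^2) * hc0 + d * hdz)
        · have hcd2 : c * (d * d) = d * (1 + d) := by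
            linear_combination -e2 + (1 - d) * had - c * hbB + (-(d^2) - c*d) * h2
          have hcd : c * d = 1 + d := by
            refine mul_left_cancel₀ hdz ?_
            linear_combination hcd2
          by_cases hd1 : d = 1
          · -- g = 1
            left
            rw [Matrix.eta_fin_two g, Matrix.one_fin_two]
            refine mat2_eq ?_ ?_ ?_ hd1
            · linear_combination had + hd1
            · linear_combination hbB + (2 + d) * hd1 + h2
            · linear_combination hcd + (1 - c) * hd1 + h2
          · -- family 2
            have h1d : (1 : F) + d ≠ 0 := by
              intro h
              exact hd1 (by linear_combination -h + d * h2)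
            have hfac2 : (1 + d) * (b1 * d ^ 3 - (1 + d)) = 0 := by
              linear_combination (d^2) * e1 + (1 + d + c*d + 2*a*d) * hcd
                - (d^2*b1) * hbB + (a*d + a*d^2) * h2
            have hb13 : b1 * d ^ 3 = 1 + d := by
              rcases mul_eq_zero.mp hfac2 with h | h
              · exact absurd h h1d
              · linear_combination h
            right; right
            refine ⟨d, hdz, (eq_div_iff (pow_ne_zero 3 hdz)).mpr hb13, ?_⟩
            rw [Matrix.eta_fin_two g]
            exact mat2_eq had hbB ((eq_div_iff hdz).mpr hcd) rfl
      · -- Case A : a + d = 1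
        have hs : a + d = 1 := by linear_combination hs1
        have haA : a = 1 + d := by linear_combination hs - d * h2
        have hbA : b = 1 + d + d ^ 2 := by
          linear_combination -e4 + hs + (-d - d^2 + b - b*d) * h2
        by_cases hu1 : (1 : F) + d = 0
        · -- d = 1 subcase
          have hd1 : d = 1 := by linear_combination -hu1 + d * h2
          have ha0 : a = 0 := by linear_combination hs - hd1
          have hbA2 : b = 1 := by
            linear_combination -e4 + ha0 + (-1 - d - 2*b) * hd1 - h2
          have hcb : c = b1 := by
            linear_combination e8 + (b1 + b*b1) * hbA2 + d * hd1
          have hb1q : b1 * (b1 - 1) = 0 := by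
            linear_combination -e1 - (2*c) * ha0 + b1 * hbA2 + (-b1 - c) * hcb
          have hb1one : b1 = 1 := by
            rcases mul_eq_zero.mp hb1q with h | h
            · exact absurd h hb1
            · linear_combination h
          right; left
          refine ⟨1, ?_, ?_, ?_⟩
          · have h3 : (1 : F) ^ 2 + 1 + 1 = 1 := by linear_combination h2
            rw [h3]; exact one_ne_zero
          · have h3 : (1 : F) ^ 2 + 1 + 1 = 1 := by linear_combination h2
            rw [h3, hb1one]; norm_num
          · rw [Matrix.eta_fin_two g]
            refine mat2_eq ?_ ?_ ?_ hd1
            · linear_combination ha0 - h2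
            · linear_combination hbA2 - h2
            · linear_combination hcb + hb1one
        · -- d ≠ 1 subcase : family 1
          have hfac : (1 + d) * (1 + d) * (c - 1) = 0 := by
            linear_combination -e2 + (1 - d) * hs - c * hbA - (2*d) * h2
          have hc1 : c = 1 := by
            rcases mul_eq_zero.mp hfac with h | h
            · exact absurd (by rcases mul_eq_zero.mp h with h' | h' <;> exact h') hu1
            · linear_combination h
          have hbb1 : b1 * (d ^ 2 + d + 1) = 1 := by
            linear_combination e1 + (2*c) * hs - b1 * hbA + (3 - 2*d + c) * hc1 + (1 - d) * h2
          right; left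
          refine ⟨d, right_ne_zero_of_mul_eq_one hbb1, eq_one_div_of_mul_eq_one_left hbb1, ?_⟩
          rw [Matrix.eta_fin_two g]
          exact mat2_eq haA hbA hc1 rfl
    · rintro (h | ⟨d, hne, hb1d, h⟩ | ⟨d, hdz, hb1d, h⟩) <;> rw [h, hA]
      · exact ⟨isUnit_one, by simp [Matrix.one_kronecker_one]⟩
      · have hbb : b1 * (d ^ 2 + d + 1) = 1 := by
          rw [hb1d]; exact one_div_mul_cancel hne
        constructor
        · rw [Matrix.isUnit_iff_isUnit_det, Matrix.det_fin_two_of]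
          have hv : (1 + d) * d - (1 + d + d ^ 2) * 1 = -1 := by ring
          rw [hv]; exact isUnit_one.neg
        · rw [aut_iff']
          refine ⟨⟨⟨?_, ?_⟩, ?_, ?_⟩, ⟨?_, ?_⟩, ?_, ?_⟩
          · linear_combination (3 + 2*d) * hbb + (-b1 - 2*d*b1 - 2*d^2*b1 - d^3*b1) * h2
          · linear_combination (2*d + 2*d^2) * hbb + (-(d*b1) - 2*d^2*b1 - 2*d^3*b1 - d^4*b1) * h2
          · linear_combination (2*d + 2*d^2) * hbb + (-(d*b1) - 2*d^2*b1 - 2*d^3*b1 - d^4*b1) * h2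
          · linear_combination (-2 + 2*d^2 + 2*d^3) * hbb + (b1 + d*b1 - 2*d^3*b1 - 2*d^4*b1 - d^5*b1) * h2
          · linear_combination hbb + (-b1 - d*b1 - d^2*b1) * h2
          · linear_combination (-1 + d) * hbb + (-(d*b1) - d^2*b1 - d^3*b1) * h2
          · linear_combination (-1 + d) * hbb + (-(d*b1) - d^2*b1 - d^3*b1) * h2
          · linear_combination (-1 - d + d^2) * hbb + (-(d^2*b1) - d^3*b1 - d^4*b1) * h2
      · have hcd : ((1 + d) / d) * d = 1 + d := div_mul_cancel₀ _ hdz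
        have hb13 : b1 * d ^ 3 = 1 + d := by
          rw [hb1d]; exact div_mul_cancel₀ _ (pow_ne_zero 3 hdz)
        constructor
        · rw [Matrix.isUnit_iff_isUnit_det, Matrix.det_fin_two_of]
          have hv : d * d - (d + d ^ 2) * ((1 + d) / d) = -1 := by
            refine mul_left_cancel₀ hdz ?_
            linear_combination (-d - d^2) * hcd - d^2 * h2
          rw [hv]; exact isUnit_one.neg
        · rw [aut_iff']
          refine ⟨⟨⟨?_, ?_⟩, ?_, ?_⟩, ⟨?_, ?_⟩, ?_, ?_⟩ <;>
            refine mul_left_cancel₀ (pow_ne_zero 3 hdz) ?_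
          · linear_combination (-d - d^2 - d^2*((1+d)/d) - 2*d^3) * hcd + (d + d^2) * hb13 + (-(d^3) - d^4) * h2
          · linear_combination (-(2*d^3) - d^4) * hcd + (-(d^3) - d^4 - d^5) * h2
          · linear_combination (-(2*d^3) - d^4) * hcd + (-(d^3) - d^4 - d^5) * h2
          · linear_combination (d^4 - d^5 - d^6) * h2
          · linear_combination (-d - d^2 - d^2*((1+d)/d)) * hcd + (d - d^2) * hb13 + (-(d^2) - d^3) * h2
          · linear_combination (d^2 - d^3) * hcd + (-(d^2) - d^3) * hb13 + (-(d^3) - d^4) * h2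
          · linear_combination (d^2 - d^3) * hcd + (-(d^2) - d^3) * hb13 + (-(d^3) - d^4) * h2
          · linear_combination (d^2) * hcd + (-(d^2) - 2*d^3 - d^4) * hb13 + (-(d^3) - d^4 - d^5) * h2
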